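/- Let F be a non-principal filter on ℕ such that for every partition of ℕ into disjoint finite sets there is a member of F disjoint from infinitely many blocks of the partition. Then the set of enumeration functions of members of F is unbounded with respect to eventual domination. -/

import Mathlib

open Filter Set

/-- A strategy: maps finite sequences of the opponent's moves to a natural number. -/
abbrev Strat := List ℕ → ℕ

/-- TWO's move in inning `k` (0-indexed) when following strategy `σ` against ONE's
moves `m`: TWO has seen `m 0, …, m k`. -/
def twoFollow (σ : Strat) (m : ℕ → ℕ) (k : ℕ) : ℕ :=
  σ (List.ofFn fun i : Fin (k + 1) => m i)

/-- ONE's move in inning `k` when following strategy `σ` against TWO's moves `n`: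
ONE's move depends on `n 0, …, n (k-1)` (the first move is `σ []`). -/
def oneFollow (σ : Strat) (n : ℕ → ℕ) (k : ℕ) : ℕ :=
  σ (List.ofFn fun i : Fin k => n i)

/-- TWO wins the play `(m 0, n 0, m 1, n 1, …)` of the game `G1(F)`. -/
def TwoWins1 (F : Set (Set ℕ)) (m n : ℕ → ℕ) : Prop :=
  StrictMono n ∧ (∀ N : ℕ, ∃ k, N ≤ k ∧ m k < n k) ∧ Set.range n ∈ F

/-- TWO wins the play `(m 0, n 0, m 1, n 1, …)` of the game `G2(F)`. -/
def TwoWins2 (F : Set (Set ℕ)) (m n : ℕ → ℕ) : Prop :=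
  (∀ᶠ k in Filter.atTop, m k < n k) ∧ Set.range n ∈ F

/-- `σ` is a winning strategy for TWO in `G1(F)`. -/
def TwoWinning1 (F : Set (Set ℕ)) (σ : Strat) : Prop :=
  ∀ m : ℕ → ℕ, TwoWins1 F m (twoFollow σ m)

/-- `σ` is a winning strategy for ONE in `G1(F)`. -/
def OneWinning1 (F : Set (Set ℕ)) (σ : Strat) : Prop :=
  ∀ n : ℕ → ℕ, ¬ TwoWins1 F (oneFollow σ n) n

/-- `σ` is a winning strategy for TWO in `G2(F)`. -/
def TwoWinning2 (F : Set (Set ℕ)) (σ : Strat) : Prop :=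
  ∀ m : ℕ → ℕ, TwoWins2 F m (twoFollow σ m)

/-- `σ` is a winning strategy for ONE in `G2(F)`. -/
def OneWinning2 (F : Set (Set ℕ)) (σ : Strat) : Prop :=
  ∀ n : ℕ → ℕ, ¬ TwoWins2 F (oneFollow σ n) n

/-- `F` is a non-principal filter on `ℕ`: upward closed, closed under finite
intersections, and every member is infinite. -/
def IsNPFilter (F : Set (Set ℕ)) : Prop :=
  (∀ X ∈ F, ∀ Y : Set ℕ, X ⊆ Y → Y ∈ F) ∧
  (∀ X ∈ F, ∀ Y ∈ F, X ∩ Y ∈ F) ∧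
  (∀ X ∈ F, X.Infinite)

/-- `F` is a rare filter: every partition of `ℕ` into disjoint (nonempty) finite sets
admits a selector in `F`. -/
def IsRare (F : Set (Set ℕ)) : Prop :=
  ∀ I : ℕ → Set ℕ, (∀ n, (I n).Finite) → (∀ n, (I n).Nonempty) →
    (Pairwise fun i j => Disjoint (I i) (I j)) → (⋃ n, I n) = Set.univ →
    ∃ X ∈ F, ∀ n, (X ∩ I n).Subsingleton

/-- The subset of Cantor space `2^ℕ` corresponding to the filter `F`. -/
def cantorCoded (F : Set (Set ℕ)) : Set (ℕ → Bool) :=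
  {χ | {n | χ n = true} ∈ F}

/-- The increasing enumeration of `X ⊆ ℕ`. -/
noncomputable def enum (X : Set ℕ) : ℕ → ℕ := Nat.nth (· ∈ X)

/-- `g` eventually dominates `f`. -/
def EvDom (g f : ℕ → ℕ) : Prop := ∀ᶠ k in Filter.atTop, f k < g k

/-- If for every partition of `ℕ` into disjoint finite sets some member of `F` is
disjoint from infinitely many blocks, then the enumeration functions of members of
`F` are unbounded under eventual domination. -/
theorem stmt13 (F : Set (Set ℕ)) (hF : IsNPFilter F)
    (h : ∀ I : ℕ → Set ℕ, (∀ n, (I n).Finite) → (∀ n, (I n).Nonempty) →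
      (Pairwise fun i j => Disjoint (I i) (I j)) → (⋃ n, I n) = Set.univ →
      ∃ X ∈ F, {n : ℕ | X ∩ I n = ∅}.Infinite) :
    ∀ g : ℕ → ℕ, ∃ X ∈ F, ¬ EvDom g (enum X) := by
  classical
  intro g
  set a : ℕ → ℕ := fun n => Nat.rec 0 (fun _ an => max (an + 1) (g an + 1)) n with ha
  have ha0 : a 0 = 0 := rfl
  have hstep : ∀ n, a (n + 1) = max (a n + 1) (g (a n) + 1) := fun n => rfl
  have hlt : ∀ n, a n < a (n + 1) := fun n => by
    rw [hstep]; exact lt_of_lt_of_le (Nat.lt_succ_self _) (le_max_left _ _)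
  have hmono : StrictMono a := strictMono_nat_of_lt_succ hlt
  have hge : ∀ m, m ≤ a m := fun m => by
    induction m with
    | zero => simp [ha0]
    | succ k ih => exact Nat.succ_le_of_lt (lt_of_le_of_lt ih (hlt k))
  set I : ℕ → Set ℕ := fun n => Set.Ico (a n) (a (n + 1)) with hI
  have hfin : ∀ n, (I n).Finite := fun n => Set.finite_Ico _ _
  have hne : ∀ n, (I n).Nonempty := fun n => ⟨a n, le_refl _, hlt n⟩
  have hdisj : Pairwise fun i j => Disjoint (I i) (I j) := by
    have key : ∀ i j, i < j → Disjoint (I i) (I j) := by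
      intro i j hij
      rw [Set.disjoint_left]
      rintro x ⟨_, hx2⟩ ⟨hx3, _⟩
      exact lt_irrefl x (lt_of_lt_of_le hx2 (le_trans (hmono.monotone hij) hx3))
    intro i j hij
    rcases lt_or_gt_of_ne hij with hij | hij
    · exact key i j hij
    · exact (key j i hij).symm
  have hcov : (⋃ n, I n) = Set.univ := by
    ext x
    simp only [Set.mem_iUnion, Set.mem_univ, iff_true]
    set n := Nat.findGreatest (fun m => a m ≤ x) x with hn
    have h1 : a n ≤ x := Nat.findGreatest_spec (P := fun m => a m ≤ x) (Nat.zero_le x)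
      (by simp [ha0])
    have h2 : x < a (n + 1) := by
      by_contra hc
      push_neg at hc
      have hle : n + 1 ≤ x := le_trans (hge (n + 1)) hc
      exact Nat.findGreatest_is_greatest (Nat.lt_succ_self n) hle hc
    exact ⟨n, h1, h2⟩
  obtain ⟨X, hXF, hinf⟩ := h I hfin hne hdisj hcov
  refine ⟨X, hXF, ?_⟩
  have hXinf : X.Infinite := hF.2.2 X hXF
  have key : ∀ n, X ∩ I n = ∅ → g (a n) < enum X (a n) := by
    intro n hEmpty
    have hcount : Nat.count (· ∈ X) (a (n + 1)) ≤ a n := by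
      rw [Nat.count_eq_card_filter_range]
      calc ((Finset.range (a (n + 1))).filter (· ∈ X)).card ≤ (Finset.range (a n)).card := by
            apply Finset.card_le_card
            intro x hx
            simp only [Finset.mem_filter, Finset.mem_range] at hx ⊢
            by_contra hxn
            push_neg at hxn
            have hmem : x ∈ X ∩ I n := ⟨hx.2, hxn, hx.1⟩
            rw [hEmpty] at hmem
            exact hmem
        _ = a n := Finset.card_range _
    have h2 := (Nat.count_le_iff_le_nth (p := (· ∈ X)) hXinf).mp hcount
    calc g (a n) < a (n + 1) := lt_of_lt_of_le (Nat.lt_succ_self _)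
          (le_trans (le_max_right _ _) (hstep n).ge)
      _ ≤ enum X (a n) := h2
  intro hdom
  rw [EvDom, Filter.eventually_atTop] at hdom
  obtain ⟨N, hN⟩ := hdom
  obtain ⟨n, hn, hnN⟩ := hinf.exists_gt N
  exact absurd (hN (a n) (le_trans hnN.le (hge n))) (not_lt_of_ge (key n hn).le)
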